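/- arXiv:1711.11245 — 2 statements merged into one kernel-verified Lean document; each statement's English description precedes it below -/
import Mathlib

section
/- Let κ, γ, T₀, P₀, R₀, X be real constants with P₀, R₀ ≠ 0. Suppose ρ_e, u_e, P_e, P₂e, R_e : ℝ → ℝ are smooth functions of x alone, with R_e nowhere zero, such that the time-independent fields ρ(x,t) = ρ_e(x), u(x,t) = u_e(x), P(x,t) = P_e(x), P₂(x,t) = P₂e(x), R(x,t) = R_e(x) satisfy the equations (E1)–(E5) of the one-dimensional dimensionless bubbly-fluid model for all (x,t). Then for every real constant c, the fields ρ(x,t) = ρ_e(x−ct), u(x,t) = u_e(x−ct) + c, P(x,t) = P_e(x−ct), P₂(x,t) = P₂e(x−ct), R(x,t) = R_e(x−ct) also satisfy (E1)–(E5) for all (x,t); i.e., every equilibrium configuration generates a one-parameter family of traveling-wave solutions. -/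
/-- Partial derivative in the first (spatial) variable. -/
noncomputable def pdX (f : ℝ → ℝ → ℝ) (x t : ℝ) : ℝ := deriv (fun y => f y t) x

/-- Partial derivative in the second (time) variable. -/
noncomputable def pdT (f : ℝ → ℝ → ℝ) (x t : ℝ) : ℝ := deriv (fun s => f x s) t

/-- Material derivative `D_t = ∂/∂t + u ∂/∂x`. -/
noncomputable def matD (u f : ℝ → ℝ → ℝ) : ℝ → ℝ → ℝ :=
  fun x t => pdT f x t + u x t * pdX f x t

/-- The one-dimensional dimensionless bubbly-fluid model (E1)–(E5). -/
def SolvesBF (κ γ T₀ P₀ R₀ X : ℝ) (ρ u P P₂ R : ℝ → ℝ → ℝ) : Prop :=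
  (∀ x t : ℝ, pdT ρ x t + pdX (fun a b => ρ a b * u a b) x t = 0) ∧
  (∀ x t : ℝ, pdT (fun a b => ρ a b * u a b) x t
      + pdX (fun a b => ρ a b * (u a b) ^ 2 + P a b) x t
      - pdX (fun a b => pdX u a b) x t + κ * ρ x t = 0) ∧
  (∀ x t : ℝ, P x t = P₂ x t -
      (R x t * matD u (matD u R) x t + (3 / 2) * (matD u R x t) ^ 2
        + (4 / 3) * (matD u R x t) / R x t)) ∧
  (∀ x t : ℝ, matD u P₂ x t + 3 * γ * P₂ x t * (matD u R x t) / R x t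
      + 3 * (γ - 1) * (T₀ / R x t) * ((P₂ x t / P₀) * (R x t / R₀) ^ 3 - 1) = 0) ∧
  (∀ x t : ℝ, (1 - X + (R x t) ^ 3) * ρ x t - 1 = 0)

lemma pdX_shift (f : ℝ → ℝ) (c x t : ℝ) :
    pdX (fun a b => f (a - c * b)) x t = deriv f (x - c * t) := by
  simpa [pdX] using deriv_comp_sub_const (f := f) (a := c * t) (x := x)

lemma pdT_shift (f : ℝ → ℝ) (c x t : ℝ) (hf : DifferentiableAt ℝ f (x - c * t)) :
    pdT (fun a b => f (a - c * b)) x t = -c * deriv f (x - c * t) := by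
  have hi : HasDerivAt (fun s : ℝ => x - c * s) (-c) t := by
    simpa using ((hasDerivAt_id t).const_mul c).const_sub x
  have := hf.hasDerivAt.comp t hi
  simpa [pdT, mul_comm, Function.comp_def] using this.deriv

lemma matD_shift (ue f : ℝ → ℝ) (c x t : ℝ) (hf : DifferentiableAt ℝ f (x - c * t)) :
    matD (fun a b => ue (a - c * b) + c) (fun a b => f (a - c * b)) x t
      = ue (x - c * t) * deriv f (x - c * t) := by
  rw [matD, pdT_shift f c x t hf, pdX_shift]; ring

lemma matD_eqm (ue f : ℝ → ℝ) :
    matD (fun a (_ : ℝ) => ue a) (fun a (_ : ℝ) => f a) = fun a _ => ue a * deriv f a := by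
  funext a b; simp [matD, pdT, pdX]

/-- Every equilibrium configuration of the bubbly-fluid model generates a one-parameter
family of traveling-wave solutions (Proposition 2.3 of the paper). -/
theorem traveling_waves_from_equilibria (κ γ T₀ P₀ R₀ X : ℝ) (hP₀ : P₀ ≠ 0) (hR₀ : R₀ ≠ 0)
    (ρe ue Pe P2e Re : ℝ → ℝ)
    (hρe : ContDiff ℝ (⊤ : ℕ∞) ρe) (hue : ContDiff ℝ (⊤ : ℕ∞) ue)
    (hPe : ContDiff ℝ (⊤ : ℕ∞) Pe) (hP2e : ContDiff ℝ (⊤ : ℕ∞) P2e)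
    (hRe : ContDiff ℝ (⊤ : ℕ∞) Re)
    (hRne : ∀ x : ℝ, Re x ≠ 0)
    (hsol : SolvesBF κ γ T₀ P₀ R₀ X
      (fun x _ => ρe x) (fun x _ => ue x) (fun x _ => Pe x)
      (fun x _ => P2e x) (fun x _ => Re x))
    (c : ℝ) :
    SolvesBF κ γ T₀ P₀ R₀ X
      (fun x t => ρe (x - c * t))
      (fun x t => ue (x - c * t) + c)
      (fun x t => Pe (x - c * t))
      (fun x t => P2e (x - c * t))
      (fun x t => Re (x - c * t)) := by
  obtain ⟨h1, h2, h3, h4, h5⟩ := hsol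
  have dρ : Differentiable ℝ ρe := hρe.differentiable (by simp)
  have du : Differentiable ℝ ue := hue.differentiable (by simp)
  have dPe : Differentiable ℝ Pe := hPe.differentiable (by simp)
  have dP2 : Differentiable ℝ P2e := hP2e.differentiable (by simp)
  have dRe : Differentiable ℝ Re := hRe.differentiable (by simp)
  have dRe' : Differentiable ℝ (deriv Re) :=
    ((contDiff_infty_iff_deriv.mp hRe).2).differentiable (by simp)
  have dg : Differentiable ℝ (fun z => ue z * deriv Re z) := du.mul dRe'
  refine ⟨?_, ?_, ?_, ?_, ?_⟩
  · -- E1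
    intro x t
    set y := x - c * t with hy
    have hA : pdT (fun a b => ρe (a - c * b) * (ue (a - c * b) + c)) x t
        = -c * deriv (fun z => ρe z * (ue z + c)) y :=
      pdT_shift (fun z => ρe z * (ue z + c)) c x t
        (((dρ y).mul ((du y).add_const c)))
    have hB : pdT (fun a b => ρe (a - c * b)) x t = -c * deriv ρe y :=
      pdT_shift ρe c x t (dρ y)
    have hg1 : deriv (fun z => ρe z * (ue z + c)) y
        = deriv ρe y * (ue y + c) + ρe y * deriv ue y :=
      ((dρ y).hasDerivAt.mul ((du y).hasDerivAt.add_const c)).deriv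
    have h1' := h1 y 0
    simp only [pdT, pdX, deriv_const] at h1'
    rw [show deriv (fun y => ρe y * ue y) y = _ from ((dρ y).hasDerivAt.mul (du y).hasDerivAt).deriv] at h1'
    show pdT (fun a b => ρe (a - c * b)) x t
        + pdX (fun a b => ρe (a - c * b) * (ue (a - c * b) + c)) x t = 0
    rw [hB, pdX_shift (fun z => ρe z * (ue z + c)) c x t, hg1]
    linarith
  · -- E2
    intro x t
    set y := x - c * t with hy
    have hA : pdT (fun a b => ρe (a - c * b) * (ue (a - c * b) + c)) x t
        = -c * deriv (fun z => ρe z * (ue z + c)) y :=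
      pdT_shift (fun z => ρe z * (ue z + c)) c x t
        (((dρ y).mul ((du y).add_const c)))
    have hg1 : deriv (fun z => ρe z * (ue z + c)) y
        = deriv ρe y * (ue y + c) + ρe y * deriv ue y :=
      ((dρ y).hasDerivAt.mul ((du y).hasDerivAt.add_const c)).deriv
    have hg2 : deriv (fun z => ρe z * (ue z + c) ^ 2 + Pe z) y
        = deriv ρe y * (ue y + c) ^ 2 + ρe y * (2 * (ue y + c) * deriv ue y)
          + deriv Pe y := by
      have : deriv (fun z => ρe z * (ue z + c) ^ 2 + Pe z) y = _ := (((dρ y).hasDerivAt.mul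
        (((du y).hasDerivAt.add_const c).pow 2)).add (dPe y).hasDerivAt).deriv
      simpa using this
    have hge : deriv (fun z => ρe z * ue z ^ 2 + Pe z) y
        = deriv ρe y * ue y ^ 2 + ρe y * (2 * ue y * deriv ue y) + deriv Pe y := by
      have : deriv (fun z => ρe z * ue z ^ 2 + Pe z) y = _ := (((dρ y).hasDerivAt.mul
        ((du y).hasDerivAt.pow 2)).add (dPe y).hasDerivAt).deriv
      simpa using this
    have hC1 : (fun (a b : ℝ) => pdX (fun x t => ue (x - c * t) + c) a b)
        = fun a b => deriv ue (a - c * b) := by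
      funext a b
      simp [pdX, deriv_comp_sub_const]
    have h1' := h1 y 0
    simp only [pdT, pdX, deriv_const] at h1'
    rw [show deriv (fun y => ρe y * ue y) y = _ from ((dρ y).hasDerivAt.mul (du y).hasDerivAt).deriv] at h1'
    have h2' := h2 y 0
    simp only [pdT, pdX, deriv_const] at h2'
    rw [hge] at h2'
    show pdT (fun a b => ρe (a - c * b) * (ue (a - c * b) + c)) x t
        + pdX (fun a b => ρe (a - c * b) * (ue (a - c * b) + c) ^ 2 + Pe (a - c * b)) x t
        - pdX (fun a b => pdX (fun x t => ue (x - c * t) + c) a b) x t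
        + κ * ρe (x - c * t) = 0
    rw [hA, hC1, pdX_shift (fun z => ρe z * (ue z + c) ^ 2 + Pe z) c x t,
      pdX_shift (deriv ue) c x t, hg1, hg2]
    change _ - deriv (deriv ue) y + κ * ρe y = 0 at h2'
    show -c * _ + _ - deriv (deriv ue) y + κ * ρe y = 0
    linear_combination h2' + c * h1'
  · -- E3
    intro x t
    have hMfun : matD (fun a b => ue (a - c * b) + c) (fun a b => Re (a - c * b))
        = fun a b => (fun z => ue z * deriv Re z) (a - c * b) := by
      funext a b
      exact matD_shift ue Re c a b (dRe _)
    have h3' := h3 (x - c * t) 0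
    rw [matD_eqm ue Re, matD_eqm ue (fun z => ue z * deriv Re z)] at h3'
    simp only at h3'
    show Pe (x - c * t) = P2e (x - c * t) -
      (Re (x - c * t) * matD (fun a b => ue (a - c * b) + c)
          (matD (fun a b => ue (a - c * b) + c) (fun a b => Re (a - c * b))) x t
        + 3 / 2 * (matD (fun a b => ue (a - c * b) + c) (fun a b => Re (a - c * b)) x t) ^ 2
        + 4 / 3 * (matD (fun a b => ue (a - c * b) + c) (fun a b => Re (a - c * b)) x t)
          / Re (x - c * t))
    rw [matD_shift ue Re c x t (dRe _), hMfun,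
      matD_shift ue (fun z => ue z * deriv Re z) c x t (dg _)]
    exact h3'
  · -- E4
    intro x t
    have h4' := h4 (x - c * t) 0
    rw [matD_eqm ue P2e, matD_eqm ue Re] at h4'
    show matD (fun a b => ue (a - c * b) + c) (fun a b => P2e (a - c * b)) x t
        + 3 * γ * P2e (x - c * t) *
          (matD (fun a b => ue (a - c * b) + c) (fun a b => Re (a - c * b)) x t) / Re (x - c * t)
        + 3 * (γ - 1) * (T₀ / Re (x - c * t)) * ((P2e (x - c * t) / P₀) * (Re (x - c * t) / R₀) ^ 3 - 1) = 0
    rw [matD_shift ue P2e c x t (dP2 _), matD_shift ue Re c x t (dRe _)]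
    exact h4'
  · -- E5
    intro x t
    exact h5 (x - c * t) 0
end

section
/- Let γ be a real constant, R : ℝ → ℝ differentiable with R(t) > 0 for all t, and P₂ : ℝ → ℝ differentiable. Let u₂, q : ℝ×ℝ → ℝ be such that, for each t, the maps r ↦ r²·u₂(r,t) and r ↦ r²·q(r,t) are continuously differentiable on [0, R(t)], and for all r ∈ [0, R(t)]: r²·P₂′(t) + γ·P₂(t)·∂/∂r(r²·u₂(r,t)) + (γ−1)·∂/∂r(r²·q(r,t)) = 0, together with the boundary condition u₂(R(t), t) = R′(t). Then for all t: P₂′(t) + (3γ·P₂(t)/R(t))·R′(t) + (3(γ−1)/R(t))·q(R(t), t) = 0. -/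
open MeasureTheory intervalIntegral

lemma ftc_icc {b : ℝ} (hb : 0 < b) {f : ℝ → ℝ}
    (hf : ContDiffOn ℝ 1 f (Set.Icc 0 b)) :
    ∫ r in (0:ℝ)..b, derivWithin f (Set.Icc 0 b) r = f b - f 0 := by
  have hud : UniqueDiffOn ℝ (Set.Icc (0:ℝ) b) := uniqueDiffOn_Icc hb
  have hcont : ContinuousOn f (Set.Icc 0 b) := hf.continuousOn
  have hder : ∀ x ∈ Set.Ioo (0:ℝ) b,
      HasDerivWithinAt f (derivWithin f (Set.Icc 0 b) x) (Set.Ioi x) x := by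
    intro x hx
    have hmem : Set.Icc (0:ℝ) b ∈ nhds x := Icc_mem_nhds hx.1 hx.2
    have h1 := ((hf.differentiableOn one_ne_zero) x (Set.Ioo_subset_Icc_self hx)).hasDerivWithinAt
    exact (h1.hasDerivAt hmem).hasDerivWithinAt
  have hint : IntervalIntegrable (derivWithin f (Set.Icc 0 b)) volume 0 b :=
    (hf.continuousOn_derivWithin hud le_rfl).intervalIntegrable_of_Icc hb.le
  exact intervalIntegral.integral_eq_sub_of_hasDeriv_right_of_le hb.le hcont hder hint

/-- Integration of the radial gas-energy PDE over the bubble `0 ≤ r ≤ R(t)` yields the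
heat-balance ODE (2.10) of the paper. -/
theorem bubble_heat_balance (γ : ℝ)
    (R P₂ : ℝ → ℝ) (hR : Differentiable ℝ R) (hP₂ : Differentiable ℝ P₂)
    (hRpos : ∀ t : ℝ, 0 < R t)
    (u₂ q : ℝ → ℝ → ℝ)
    (hu : ∀ t : ℝ, ContDiffOn ℝ 1 (fun r => r ^ 2 * u₂ r t) (Set.Icc 0 (R t)))
    (hq : ∀ t : ℝ, ContDiffOn ℝ 1 (fun r => r ^ 2 * q r t) (Set.Icc 0 (R t)))
    (hpde : ∀ t : ℝ, ∀ r ∈ Set.Icc (0 : ℝ) (R t),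
      r ^ 2 * deriv P₂ t
        + γ * P₂ t * derivWithin (fun s => s ^ 2 * u₂ s t) (Set.Icc 0 (R t)) r
        + (γ - 1) * derivWithin (fun s => s ^ 2 * q s t) (Set.Icc 0 (R t)) r = 0)
    (hbc : ∀ t : ℝ, u₂ (R t) t = deriv R t) :
    ∀ t : ℝ, deriv P₂ t + 3 * γ * P₂ t / R t * deriv R t
      + 3 * (γ - 1) / R t * q (R t) t = 0 := by
  intro t
  have hRt := hRpos t
  have hR0 : (0:ℝ) ≤ R t := hRt.le
  have hne : R t ≠ 0 := hRt.ne'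
  set c := deriv P₂ t with hc
  set f : ℝ → ℝ := fun r => r ^ 2 * u₂ r t with hfdef
  set g : ℝ → ℝ := fun r => r ^ 2 * q r t with hgdef
  set S := Set.Icc (0:ℝ) (R t) with hS
  have hud : UniqueDiffOn ℝ S := uniqueDiffOn_Icc hRt
  have hf' : ContinuousOn (derivWithin f S) S := (hu t).continuousOn_derivWithin hud le_rfl
  have hg' : ContinuousOn (derivWithin g S) S := (hq t).continuousOn_derivWithin hud le_rfl
  have h1 : IntervalIntegrable (fun r : ℝ => r ^ 2 * c) volume 0 (R t) :=
    (continuous_pow 2 |>.mul continuous_const).intervalIntegrable 0 (R t)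
  have h2 : IntervalIntegrable (fun r => γ * P₂ t * derivWithin f S r) volume 0 (R t) :=
    ((continuousOn_const.mul hf')).intervalIntegrable_of_Icc hR0
  have h3 : IntervalIntegrable (fun r => (γ - 1) * derivWithin g S r) volume 0 (R t) :=
    ((continuousOn_const.mul hg')).intervalIntegrable_of_Icc hR0
  have hzero : ∫ r in (0:ℝ)..R t,
      (r ^ 2 * c + γ * P₂ t * derivWithin f S r + (γ - 1) * derivWithin g S r) = 0 := by
    have heq : Set.EqOn
        (fun r : ℝ => r ^ 2 * c + γ * P₂ t * derivWithin f S r + (γ - 1) * derivWithin g S r)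
        (fun _ => (0:ℝ)) (Set.uIcc 0 (R t)) := by
      rw [Set.uIcc_of_le hR0]
      intro r hr
      exact hpde t r hr
    rw [intervalIntegral.integral_congr heq, intervalIntegral.integral_zero]
  rw [intervalIntegral.integral_add (h1.add h2) h3, intervalIntegral.integral_add h1 h2] at hzero
  have e1 : ∫ r in (0:ℝ)..R t, r ^ 2 * c = (R t) ^ 3 / 3 * c := by
    rw [intervalIntegral.integral_mul_const, integral_pow]
    ring
  have e2 : ∫ r in (0:ℝ)..R t, γ * P₂ t * derivWithin f S r
      = γ * P₂ t * ((R t) ^ 2 * deriv R t) := by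
    rw [intervalIntegral.integral_const_mul, hS, ftc_icc hRt (hu t)]
    simp [hfdef, hbc t]
  have e3 : ∫ r in (0:ℝ)..R t, (γ - 1) * derivWithin g S r
      = (γ - 1) * ((R t) ^ 2 * q (R t) t) := by
    rw [intervalIntegral.integral_const_mul, hS, ftc_icc hRt (hq t)]
    simp [hgdef]
  rw [e1, e2, e3] at hzero
  have key : R t ^ 2 * (c * R t + 3 * γ * P₂ t * deriv R t + 3 * (γ - 1) * q (R t) t) = 0 := by
    linear_combination 3 * hzero
  have key2 := (mul_eq_zero.mp key).resolve_left (pow_ne_zero 2 hne)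
  field_simp
  linarith [key2]
end
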